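/- For natural numbers n, r and any real x, (x+r)^n = ∑_{k=0}^{n} S_r(n+r, k+r) · x(x-1)⋯(x-k+1). -/

import Mathlib

open Finset

/-- The cells of a mixed configuration: `c i` mutually indistinguishable cells of type `i`,
cells of different types being distinguishable. -/
abbrev MixedCell {k : ℕ} (c : Fin k → ℕ) : Type := (i : Fin k) × Fin (c i)

/-- Two distributions of balls into cells are identified iff they differ by a
type-preserving permutation of the cells. -/
def mixedRel {n k : ℕ} (c : Fin k → ℕ) (f g : Fin n → MixedCell c) : Prop :=
  ∃ σ : Equiv.Perm (MixedCell c), (∀ x, (σ x).1 = x.1) ∧ g = σ ∘ f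

/-- Number of distributions of `n` distinct balls into the configuration `c`,
empty cells allowed. -/
noncomputable def mixedCount₀ (n : ℕ) {k : ℕ} (c : Fin k → ℕ) : ℕ :=
  Nat.card (Quot (mixedRel (n := n) c))

/-- Number of distributions of `n` distinct balls into the configuration `c`,
all cells non-empty. -/
noncomputable def mixedCount (n : ℕ) {k : ℕ} (c : Fin k → ℕ) : ℕ :=
  Nat.card (Quot fun (f g : {f : Fin n → MixedCell c // Function.Surjective f}) =>
    mixedRel c f.1 g.1)

/-- The Stirling number of the second kind: partitions of `n` labeled elements into
`k` non-empty unlabeled blocks. -/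
noncomputable def stirling (n k : ℕ) : ℕ := mixedCount n (fun _ : Fin 1 => k)

/-- The `r`-Stirling number of the second kind: partitions of `{0,…,n-1}` into `k`
non-empty blocks such that the first `r` elements lie in distinct blocks. -/
noncomputable def rStirling (n k r : ℕ) : ℕ :=
  Nat.card (Quot fun (f g : {f : Fin n → Fin k // Function.Surjective f ∧
      ∀ i j : Fin n, i.val < r → j.val < r → f i = f j → i = j}) =>
    ∃ σ : Equiv.Perm (Fin k), g.1 = σ ∘ f.1)


open Function

abbrev RValid (n k r : ℕ) : Type :=
  {f : Fin n → Fin k // Function.Surjective f ∧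
      ∀ i j : Fin n, i.val < r → j.val < r → f i = f j → i = j}

def rrel (n k r : ℕ) (f g : RValid n k r) : Prop :=
  ∃ σ : Equiv.Perm (Fin k), g.1 = σ ∘ f.1

lemma rStirling_eq (n k r : ℕ) : rStirling n k r = Nat.card (Quot (rrel n k r)) := rfl

lemma rStirling_of_isEmpty {n k r : ℕ} (h : IsEmpty (RValid n k r)) :
    rStirling n k r = 0 := by
  rw [rStirling_eq]
  have : IsEmpty (Quot (rrel n k r)) := ⟨fun q => Quot.inductionOn q h.false⟩
  exact Nat.card_of_isEmpty

lemma rStirling_of_lt {n k r : ℕ} (h : n < k) : rStirling n k r = 0 := by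
  refine rStirling_of_isEmpty ⟨fun f => ?_⟩
  have := Fintype.card_le_of_surjective f.1 f.2.1
  simp only [Fintype.card_fin] at this
  omega

lemma rStirling_of_lt_r {n k r : ℕ} (hk : k < r) (hr : r ≤ n) : rStirling n k r = 0 := by
  refine rStirling_of_isEmpty ⟨fun f => ?_⟩
  have hinj : Injective (fun i : Fin r => f.1 (Fin.castLE hr i)) := by
    intro i j hij
    have h2 := f.2.2 (Fin.castLE hr i) (Fin.castLE hr j) i.isLt j.isLt hij
    have h3 : (Fin.castLE hr i).val = (Fin.castLE hr j).val := congrArg Fin.val h2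
    exact Fin.ext h3
  have := Fintype.card_le_of_injective _ hinj
  simp only [Fintype.card_fin] at this
  omega

lemma rStirling_self (r : ℕ) : rStirling r r r = 1 := by
  rw [rStirling_eq, Nat.card_eq_one_iff_unique]
  have hbij : ∀ f : RValid r r r, Bijective f.1 := fun f =>
    (Fintype.bijective_iff_surjective_and_card f.1).mpr ⟨f.2.1, rfl⟩
  constructor
  · constructor
    intro a b
    induction a using Quot.ind with | _ f => ?_
    induction b using Quot.ind with | _ g => ?_
    apply Quot.sound
    refine ⟨(Equiv.ofBijective f.1 (hbij f)).symm.trans (Equiv.ofBijective g.1 (hbij g)), ?_⟩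
    funext x
    simp only [comp_apply, Equiv.trans_apply]
    congr 1
    exact ((Equiv.ofBijective f.1 (hbij f)).symm_apply_apply x).symm ▸ rfl
  · exact ⟨Quot.mk _ ⟨id, surjective_id, fun i j _ _ h => h⟩⟩

lemma rrel_equiv (n k r : ℕ) : Equivalence (rrel n k r) := by
  constructor
  · exact fun f => ⟨1, rfl⟩
  · rintro f g ⟨σ, h⟩
    exact ⟨σ⁻¹, by rw [h]; ext x; simp⟩
  · rintro f g h ⟨σ, h1⟩ ⟨τ, h2⟩
    exact ⟨σ.trans τ, by rw [h2, h1]; rfl⟩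

lemma rrel_of_mk_eq {n k r : ℕ} {f g : RValid n k r}
    (h : Quot.mk (rrel n k r) f = Quot.mk (rrel n k r) g) : rrel n k r f g :=
  ((rrel_equiv n k r).eqvGen_iff).mp (Quot.eq.mp h)

noncomputable def classEquiv (n k r : ℕ) :
    RValid n k r ≃ Quot (rrel n k r) × Equiv.Perm (Fin k) := by
  classical
  have spec : ∀ f : RValid n k r, ∃ σ : Equiv.Perm (Fin k),
      f.1 = σ ∘ ((Quot.mk (rrel n k r) f).out).1 := by
    intro f
    exact rrel_of_mk_eq (by rw [Quot.out_eq])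
  refine
    { toFun := fun f => ⟨Quot.mk _ f, Classical.choose (spec f)⟩
      invFun := fun p => ⟨p.2 ∘ p.1.out.1, ?_, ?_⟩
      left_inv := ?_
      right_inv := ?_ }
  · exact p.2.surjective.comp p.1.out.2.1
  · intro i j hi hj hij
    exact p.1.out.2.2 i j hi hj (p.2.injective hij)
  · intro f
    exact Subtype.ext (Classical.choose_spec (spec f)).symm
  · rintro ⟨q, σ⟩
    set g : RValid n k r := ⟨σ ∘ q.out.1, by exact σ.surjective.comp q.out.2.1,
      fun i j hi hj hij => q.out.2.2 i j hi hj (σ.injective hij)⟩ with hg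
    have hq : Quot.mk (rrel n k r) g = q := by
      have : rrel n k r q.out g := ⟨σ, rfl⟩
      rw [← Quot.out_eq q]
      exact (Quot.sound this).symm
    have hout : (Quot.mk (rrel n k r) g).out = q.out := by rw [hq]
    have key : ∀ c : Equiv.Perm (Fin k),
        g.1 = ⇑c ∘ ((Quot.mk (rrel n k r) g).out).1 → c = σ := by
      intro c hc
      rw [hout] at hc
      ext x
      obtain ⟨y, hy⟩ := q.out.2.1 x
      have h2 := congrFun hc y
      simp only [hg, comp_apply, hy] at h2
      exact congrArg Fin.val h2.symm
    have hσ : Classical.choose (spec g) = σ := key _ (Classical.choose_spec (spec g))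
    exact Prod.ext hq hσ

lemma card_RValid (n k r : ℕ) :
    Nat.card (RValid n k r) = rStirling n k r * Nat.factorial k := by
  rw [Nat.card_congr (classEquiv n k r), Nat.card_prod, rStirling_eq]
  congr 1
  rw [Nat.card_eq_fintype_card, Fintype.card_perm, Fintype.card_fin]

section Rec
variable {n k r : ℕ}

lemma init_rcon (f : RValid (n+1) k r) :
    ∀ i j : Fin n, i.val < r → j.val < r → Fin.init f.1 i = Fin.init f.1 j → i = j := by
  intro i j hi hj hij
  have := f.2.2 i.castSucc j.castSucc (by simpa) (by simpa) hij
  exact Fin.castSucc_injective n this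

lemma init_ne_of_not_surj (f : RValid (n+1) (k+1) r) (h : ¬ Surjective (Fin.init f.1)) :
    ∀ x, Fin.init f.1 x ≠ f.1 (Fin.last n) := by
  intro x hx
  apply h
  intro w
  obtain ⟨j, hj⟩ := f.2.1 w
  rcases eq_or_ne j (Fin.last n) with hl | hl
  · exact ⟨x, by rw [hx, ← hl, hj]⟩
  · obtain ⟨i, rfl⟩ := Fin.exists_castSucc_eq.mpr hl
    exact ⟨i, hj⟩

lemma snoc_rcon (hr : r ≤ n) (g : Fin n → Fin k) (v : Fin k)
    (hg : ∀ i j : Fin n, i.val < r → j.val < r → g i = g j → i = j) :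
    ∀ i j : Fin (n+1), i.val < r → j.val < r →
      (Fin.snoc g v : Fin (n+1) → Fin k) i = (Fin.snoc g v : Fin (n+1) → Fin k) j → i = j := by
  intro i j hi hj hij
  have hi' : i.val < n := lt_of_lt_of_le hi hr
  have hj' : j.val < n := lt_of_lt_of_le hj hr
  have ei : i = Fin.castSucc ⟨i.val, hi'⟩ := Fin.ext rfl
  have ej : j = Fin.castSucc ⟨j.val, hj'⟩ := Fin.ext rfl
  rw [ei, ej] at hij ⊢
  rw [Fin.snoc_castSucc, Fin.snoc_castSucc] at hij
  exact congrArg Fin.castSucc (hg _ _ hi hj hij)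

def recInvFun (hr : r ≤ n) :
    (RValid n (k+1) r × Fin (k+1)) ⊕ (Fin (k+1) × RValid n k r) → RValid (n+1) (k+1) r
  | Sum.inl p => ⟨Fin.snoc p.1.1 p.2, by
      intro w
      obtain ⟨i, hi⟩ := p.1.2.1 w
      exact ⟨i.castSucc, by rw [Fin.snoc_castSucc]; exact hi⟩,
      snoc_rcon hr p.1.1 p.2 p.1.2.2⟩
  | Sum.inr p => ⟨Fin.snoc (p.1.succAbove ∘ p.2.1) p.1, by
      intro w
      rcases eq_or_ne w p.1 with hw | hw
      · exact ⟨Fin.last n, by rw [Fin.snoc_last, hw]⟩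
      · obtain ⟨u, hu⟩ := Fin.exists_succAbove_eq hw
        obtain ⟨i, hi⟩ := p.2.2.1 u
        exact ⟨i.castSucc, by rw [Fin.snoc_castSucc, comp_apply, hi, hu]⟩,
      snoc_rcon hr _ _ (by
        intro i j hi hj hij
        exact p.2.2.2 i j hi hj (Fin.succAbove_right_injective hij))⟩

lemma recInvFun_bij (hr : r ≤ n) : Bijective (recInvFun (k := k) hr) := by
  constructor
  · rintro (⟨g, v⟩ | ⟨v, g⟩) (⟨g', v'⟩ | ⟨v', g'⟩) h <;>
      have h1 := congrArg (fun f => Fin.init f.1) h <;>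
      have h2 := congrArg (fun f => f.1 (Fin.last n)) h <;>
      simp only [recInvFun, Fin.init_snoc, Fin.snoc_last] at h1 h2
    · exact congrArg Sum.inl (Prod.ext (Subtype.ext h1) h2)
    · exfalso
      obtain ⟨i, hi⟩ := g.2.1 v'
      rw [h1] at hi
      exact Fin.succAbove_ne v' (g'.1 i) hi
    · exfalso
      obtain ⟨i, hi⟩ := g'.2.1 v
      rw [← h1] at hi
      exact Fin.succAbove_ne v (g.1 i) hi
    · subst h2
      refine congrArg Sum.inr (Prod.ext rfl (Subtype.ext (funext fun i => ?_)))
      exact Fin.succAbove_right_injective (p := v) (congrFun h1 i)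
  · intro f
    by_cases h : Surjective (Fin.init f.1)
    · refine ⟨Sum.inl (⟨Fin.init f.1, h, init_rcon f⟩, f.1 (Fin.last n)), ?_⟩
      exact Subtype.ext (Fin.snoc_init_self f.1)
    · refine ⟨Sum.inr (f.1 (Fin.last n),
        ⟨fun x => Classical.choose (Fin.exists_succAbove_eq (init_ne_of_not_surj f h x)),
         ?_, ?_⟩), ?_⟩
      · intro w
        have hne : (f.1 (Fin.last n)).succAbove w ≠ f.1 (Fin.last n) := Fin.succAbove_ne _ w
        obtain ⟨j, hj⟩ := f.2.1 ((f.1 (Fin.last n)).succAbove w)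
        have hl : j ≠ Fin.last n := fun hl => hne (by rw [← hj, hl])
        obtain ⟨i, rfl⟩ := Fin.exists_castSucc_eq.mpr hl
        refine ⟨i, Fin.succAbove_right_injective (p := f.1 (Fin.last n)) ?_⟩
        rw [Classical.choose_spec (Fin.exists_succAbove_eq (init_ne_of_not_surj f h i))]
        exact hj
      · intro i j hi hj hij
        refine init_rcon f i j hi hj ?_
        rw [← Classical.choose_spec (Fin.exists_succAbove_eq (init_ne_of_not_surj f h i)),
          ← Classical.choose_spec (Fin.exists_succAbove_eq (init_ne_of_not_surj f h j))]
        exact congrArg _ hij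
      · refine Subtype.ext (funext fun i => ?_)
        refine Fin.lastCases ?_ (fun i => ?_) i
        · simp only [recInvFun]
          exact Fin.snoc_last _ _
        · simp only [recInvFun, Fin.snoc_castSucc, comp_apply]
          rw [Classical.choose_spec (Fin.exists_succAbove_eq (init_ne_of_not_surj f h i))]
          rfl

lemma card_RValid_succ (hr : r ≤ n) :
    Nat.card (RValid (n+1) (k+1) r) =
      (k+1) * (Nat.card (RValid n (k+1) r) + Nat.card (RValid n k r)) := by
  rw [← Nat.card_eq_of_bijective _ (recInvFun_bij (n := n) (k := k) (r := r) hr)]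
  rw [Nat.card_sum, Nat.card_prod, Nat.card_prod, Nat.card_eq_fintype_card (α := Fin (k+1)),
    Fintype.card_fin]
  ring

lemma rStirling_rec (hr : r ≤ n) :
    rStirling (n+1) (k+1) r = (k+1) * rStirling n (k+1) r + rStirling n k r := by
  have h := card_RValid_succ (n := n) (k := k) (r := r) hr
  rw [card_RValid, card_RValid, card_RValid] at h
  apply Nat.eq_of_mul_eq_mul_right (Nat.factorial_pos (k+1))
  rw [h, Nat.factorial_succ]
  ring

end Rec

def rS (r : ℕ) : ℕ → ℕ → ℕ
  | 0, k => if k = 0 then 1 else 0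
  | n+1, 0 => r * rS r n 0
  | n+1, k+1 => (k+1+r) * rS r n (k+1) + rS r n k

lemma rStirling_eq_rS (r n k : ℕ) : rStirling (n + r) (k + r) r = rS r n k := by
  induction n generalizing k with
  | zero =>
    cases k with
    | zero => simpa [rS] using rStirling_self r
    | succ j =>
      rw [rStirling_of_lt (by omega : 0 + r < j + 1 + r)]
      simp [rS]
  | succ n ih =>
    cases k with
    | zero =>
      cases r with
      | zero =>
        refine (rStirling_of_isEmpty ⟨fun f => ?_⟩).trans ?_
        · exact (f.1 ⟨0, by omega⟩).elim0
        · simp [rS, ih 0]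
      | succ m =>
        have e1 : n + 1 + (m + 1) = (n + (m + 1)) + 1 := by omega
        have e2 : 0 + (m + 1) = m + 1 := by omega
        rw [e2, e1, rStirling_rec (by omega)]
        rw [rStirling_of_lt_r (by omega : m < m + 1) (by omega : m + 1 ≤ n + (m + 1))]
        have i0 := ih 0
        rw [e2] at i0
        rw [i0]
        simp [rS]
    | succ j =>
      have e1 : n + 1 + r = (n + r) + 1 := by omega
      have e2 : j + 1 + r = (j + r) + 1 := by omega
      rw [e1, e2, rStirling_rec (by omega)]
      rw [show j + r + 1 = j + 1 + r from by omega, ih (j + 1), ih j]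
      simp [rS]

lemma rS_eq_zero {r n k : ℕ} (h : n < k) : rS r n k = 0 := by
  induction n generalizing k with
  | zero => cases k with
    | zero => omega
    | succ j => simp [rS]
  | succ n ih =>
    cases k with
    | zero => omega
    | succ j =>
      have h1 : rS r n (j + 1) = 0 := ih (by omega)
      have h2 : rS r n j = 0 := ih (by omega)
      simp [rS, h1, h2]

theorem keyE (r : ℕ) (x : ℝ) (n : ℕ) :
    (x + r) ^ n = ∑ k ∈ range (n + 1), (rS r n k : ℝ) * ∏ i ∈ range k, (x - i) := by
  induction n with
  | zero => simp [rS]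
  | succ n ih =>
    have step1 : (x + r) ^ (n + 1)
        = ∑ k ∈ range (n + 1), ((rS r n k : ℝ) * ∏ i ∈ range (k + 1), (x - i))
          + ∑ k ∈ range (n + 1), ((k : ℝ) + r) * (rS r n k : ℝ) * ∏ i ∈ range k, (x - i) := by
      rw [← sum_add_distrib]
      rw [pow_succ, mul_comm, ih, mul_sum]
      refine sum_congr rfl fun k _ => ?_
      rw [prod_range_succ]
      push_cast
      ring
    have step2 : ∑ k ∈ range (n + 1), ((k : ℝ) + r) * (rS r n k : ℝ) * ∏ i ∈ range k, (x - i)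
        = ∑ k ∈ range (n + 1), (((k : ℝ) + 1) + r) * (rS r n (k + 1) : ℝ)
            * ∏ i ∈ range (k + 1), (x - i)
          + (r : ℝ) * (rS r n 0 : ℝ) := by
      rw [Finset.sum_range_succ' (fun k => ((k : ℝ) + r) * (rS r n k : ℝ) * ∏ i ∈ range k, (x - i)) n]
      rw [Finset.sum_range_succ (fun k => (((k : ℝ) + 1) + r) * (rS r n (k + 1) : ℝ)
            * ∏ i ∈ range (k + 1), (x - i)) n]
      rw [rS_eq_zero (by omega : n < n + 1)]
      push_cast
      ring
    have step3 : ∑ k ∈ range (n + 1 + 1), (rS r (n + 1) k : ℝ) * ∏ i ∈ range k, (x - i)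
        = ∑ k ∈ range (n + 1), (rS r (n + 1) (k + 1) : ℝ) * ∏ i ∈ range (k + 1), (x - i)
          + (rS r (n + 1) 0 : ℝ) := by
      rw [Finset.sum_range_succ' (fun k => (rS r (n + 1) k : ℝ) * ∏ i ∈ range k, (x - i)) (n + 1)]
      simp
    rw [step1, step2, step3]
    have hrs0 : (rS r (n + 1) 0 : ℝ) = (r : ℝ) * (rS r n 0 : ℝ) := by
      simp [rS]
    have hrsS : ∀ k : ℕ, (rS r (n + 1) (k + 1) : ℝ)
        = (((k : ℝ) + 1) + r) * (rS r n (k + 1) : ℝ) + (rS r n k : ℝ) := by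
      intro k
      simp only [rS]
      push_cast
      ring
    have hsum : ∑ k ∈ range (n + 1), (rS r (n + 1) (k + 1) : ℝ) * ∏ i ∈ range (k + 1), (x - i)
        = ∑ k ∈ range (n + 1), ((rS r n k : ℝ) * ∏ i ∈ range (k + 1), (x - i))
          + ∑ k ∈ range (n + 1), (((k : ℝ) + 1) + r) * (rS r n (k + 1) : ℝ)
              * ∏ i ∈ range (k + 1), (x - i) := by
      rw [← sum_add_distrib]
      refine sum_congr rfl fun k _ => ?_
      rw [hrsS k]
      ring
    rw [hrs0, hsum]
    ring

theorem add_pow_eq_sum_rStirling_fallingFactorial (n r : ℕ) (x : ℝ) :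
    (x + r) ^ n = ∑ k ∈ Finset.range (n + 1),
      (rStirling (n + r) (k + r) r : ℝ) * ∏ i ∈ Finset.range k, (x - i) := by
  refine (keyE r x n).trans (sum_congr rfl fun k _ => ?_).symm
  rw [rStirling_eq_rS]
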